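/- Let g, u, h₊, h₋ : ℝ → ℝ be differentiable with g, u, h₊, h₋ nonvanishing, satisfying 3g h₊' + g' h₊ − g h₊² + 2u = 2g² h₊/h₋ and 3g h₋' − g' h₋ + g h₋² − 2g² = −2u h₋/h₊. Suppose further u = (g')²/(4g) − g² − tg, u' = −g, and g'' = 6g² + 4tg + 2u. If h₋ is twice differentiable, then 9 h₋'' + 9(h₋ + g/u) h₋' + h₋³ + 3(g/u) h₋² − (3 g'/u + 12 g + 4t) h₋ − 8 g' − 6 g²/u = 0. -/

import Mathlib

/-- From the coupled Riccati system (4.20)–(4.21) for `h₊, h₋`, with `g = q²`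
and `u` the Painlevé II Hamiltonian, the function `h₋` satisfies the
second-order ODE (4.25). -/
theorem stmt_12 (g u hp hm : ℝ → ℝ)
    (hgd : Differentiable ℝ g) (hud : Differentiable ℝ u)
    (hpd : Differentiable ℝ hp) (hmd : Differentiable ℝ hm)
    (hgne : ∀ t, g t ≠ 0) (hune : ∀ t, u t ≠ 0)
    (hpne : ∀ t, hp t ≠ 0) (hmne : ∀ t, hm t ≠ 0)
    (hric1 : ∀ t, 3 * g t * deriv hp t + deriv g t * hp t - g t * hp t ^ 2 + 2 * u t
      = 2 * g t ^ 2 * hp t / hm t)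
    (hric2 : ∀ t, 3 * g t * deriv hm t - deriv g t * hm t + g t * hm t ^ 2 - 2 * g t ^ 2
      = -2 * u t * hm t / hp t)
    (hu : ∀ t, u t = (deriv g t) ^ 2 / (4 * g t) - g t ^ 2 - t * g t)
    (hu' : ∀ t, deriv u t = -g t)
    (hg'' : ∀ t, deriv (deriv g) t = 6 * g t ^ 2 + 4 * t * g t + 2 * u t)
    (hm2 : Differentiable ℝ (deriv hm)) :
    ∀ t, 9 * deriv (deriv hm) t + 9 * (hm t + g t / u t) * deriv hm t
      + hm t ^ 3 + 3 * (g t / u t) * hm t ^ 2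
      - (3 * deriv g t / u t + 12 * g t + 4 * t) * hm t
      - 8 * deriv g t - 6 * g t ^ 2 / u t = 0 := by
  -- deriv g is differentiable
  have hφ : Differentiable ℝ (fun s => (3 * (g s * deriv hm s) + g s * hm s ^ 2
      - 2 * g s ^ 2 + 2 * u s * hm s / hp s) / hm s) := by
    apply Differentiable.div _ hmd hmne
    apply Differentiable.add
    · fun_prop
    · exact Differentiable.div (by fun_prop) hpd hpne
  have hdg_eq : deriv g = (fun s => (3 * (g s * deriv hm s) + g s * hm s ^ 2
      - 2 * g s ^ 2 + 2 * u s * hm s / hp s) / hm s) := by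
    funext s
    have h := hric2 s
    rw [eq_div_iff (hpne s)] at h
    rw [eq_div_iff (hmne s)]
    field_simp [hpne s]
    linear_combination -h
  have hdgd : Differentiable ℝ (deriv g) := by rw [hdg_eq]; exact hφ
  intro t
  -- cleared hypotheses
  have e1c := hric1 t
  rw [eq_div_iff (hmne t)] at e1c
  have e2c := hric2 t
  rw [eq_div_iff (hpne t)] at e2c
  have e4c : deriv g t ^ 2 = 4 * g t * u t + 4 * g t ^ 3 + 4 * t * g t ^ 2 := by
    have h4 := hu t
    have h4' : u t + g t ^ 2 + t * g t = deriv g t ^ 2 / (4 * g t) := by linarith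
    rw [eq_div_iff (by simpa using hgne t : (4:ℝ) * g t ≠ 0)] at h4'
    linear_combination -h4'
  -- derivative of the product identity hp * A = -2 u hm
  have hA' := (((((hgd t).hasDerivAt.mul (hm2 t).hasDerivAt).const_mul (3:ℝ)).sub
      ((hdgd t).hasDerivAt.mul (hmd t).hasDerivAt)).add
      ((hgd t).hasDerivAt.mul ((hmd t).hasDerivAt.pow 2))).sub
      (((hgd t).hasDerivAt.pow 2).const_mul (2:ℝ))
  have hL := (hpd t).hasDerivAt.mul hA'
  have hR := ((hud t).hasDerivAt.mul (hmd t).hasDerivAt).const_mul (-2:ℝ)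
  have hEE : (fun x => -2 * (u x * hm x)) =ᶠ[nhds t]
      (fun x => hp x * (3 * (g x * deriv hm x) - deriv g x * hm x
        + g x * hm x ^ 2 - 2 * g x ^ 2)) := by
    apply Filter.Eventually.of_forall
    intro s
    have h := hric2 s
    rw [eq_div_iff (hpne s)] at h
    linear_combination -h
  have hL2 := hL.congr_of_eventuallyEq hEE
  have e3 := hL2.unique hR
  rw [hg'' t, hu' t] at e3
  norm_num only [Pi.add_apply, Pi.sub_apply, Pi.mul_apply, Pi.pow_apply] at e3
  -- key polynomial identity
  have key : (-2 * g t ^ 2 * hm t ^ 2 * (3 * g t * deriv hm t - deriv g t * hm t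
        + g t * hm t ^ 2 - 2 * g t ^ 2)) *
      (9 * u t * deriv (deriv hm) t + 9 * (u t * hm t + g t) * deriv hm t
        + u t * hm t ^ 3 + 3 * g t * hm t ^ 2 - 3 * deriv g t * hm t
        - 12 * g t * u t * hm t - 4 * t * u t * hm t - 8 * deriv g t * u t
        - 6 * g t ^ 2) = 0 := by
    linear_combination
      ((deriv g t) ^ 3 * (hm t) ^ 3 + (-9) * (g t) * (deriv g t) ^ 2 * (hm t) ^ 2 * (deriv hm t) + (-3) * (g t) * (deriv g t) ^ 2 * (hm t) ^ 4 + (27) * (g t) ^ 2 * (deriv g t) * (hm t) * (deriv hm t) ^ 2 + (18) * (g t) ^ 2 * (deriv g t) * (hm t) ^ 3 * (deriv hm t) + (3) * (g t) ^ 2 * (deriv g t) * (hm t) ^ 5 + (6) * (g t) ^ 2 * (deriv g t) ^ 2 * (hm t) ^ 2 + (-27) * (g t) ^ 3 * (deriv hm t) ^ 3 + (-27) * (g t) ^ 3 * (hm t) ^ 2 * (deriv hm t) ^ 2 + (-9) * (g t) ^ 3 * (hm t) ^ 4 * (deriv hm t) + (-1) * (g t) ^ 3 * (hm t) ^ 6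 + (-36) * (g t) ^ 3 * (deriv g t) * (hm t) * (deriv hm t) + (-12) * (g t) ^ 3 * (deriv g t) * (hm t) ^ 3 + (54) * (g t) ^ 4 * (deriv hm t) ^ 2 + (36) * (g t) ^ 4 * (hm t) ^ 2 * (deriv hm t) + (6) * (g t) ^ 4 * (hm t) ^ 4 + (12) * (g t) ^ 4 * (deriv g t) * (hm t) + (-36) * (g t) ^ 5 * (deriv hm t) + (-12) * (g t) ^ 5 * (hm t) ^ 2 + (8) * (g t) ^ 6) * e1c +
      ((deriv g t) ^ 3 * (hm t) ^ 3 + (-8) * (g t) * (deriv g t) * (u t) * (hm t) ^ 3 + (-1) * (g t) * (deriv g t) ^ 2 * (hm t) ^ 3 * (hp t) + (g t) * (deriv g t) ^ 2 * (hm t) ^ 4 + (24) * (g t) ^ 2 * (u t) * (hm t) ^ 2 * (deriv hm t) + (8) * (g t) ^ 2 * (u t) * (hm t) ^ 4 + (-9) * (g t) ^ 2 * (deriv g t) * (hm t) * (deriv hm t) ^ 2 + (9) * (g t) ^ 2 * (deriv g t) * (hm t) ^ 2 * (deriv (deriv hm) t) + (6) * (g t) ^ 2 * (deriv g t) * (hm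 t) ^ 2 * (deriv hm t) * (hp t) + (-12) * (g t) ^ 2 * (deriv g t) * (hm t) ^ 3 * t + (-3) * (g t) ^ 2 * (deriv g t) * (hm t) ^ 3 * (deriv hm t) + (2) * (g t) ^ 2 * (deriv g t) * (hm t) ^ 4 * (hp t) + (-2) * (g t) ^ 2 * (deriv g t) * (hm t) ^ 5 + (-10) * (g t) ^ 2 * (deriv g t) ^ 2 * (hm t) ^ 2 + (-27) * (g t) ^ 3 * (hm t) * (deriv hm t) * (deriv (deriv hm) t) + (-9) * (g t) ^ 3 * (hm t) * (deriv hm t) ^ 2 * (hp t) + (36) * (g t) ^ 3 * (hm t) ^ 2 * (deriv hm t) * t + (-18) * (g t) ^ 3 * (hm t) ^ 2 * (deriv hm t) ^ 2 + (-9) * (g t) ^ 3 * (hm t) ^ 3 * (deriv (deriv hm) t) + (-6) * (g t) ^ 3 * (hm t) ^ 3 * (deriv hm t) * (hp t) + (12) * (g t) ^ 3 * (hm t) ^ 4 * t + (-6) * (g t) ^ 3 * (hm t) ^ 4 * (deriv hm t) + (-1) * (g t) ^ 3 * (hm t) ^ 5 * (hp t) + (-16) * (g t) ^ 3 * (u t)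 * (hm t) ^ 2 + (48) * (g t) ^ 3 * (deriv g t) * (hm t) * (deriv hm t) + (-4) * (g t) ^ 3 * (deriv g t) * (hm t) ^ 2 * (hp t) + (-18) * (g t) ^ 4 * (deriv hm t) ^ 2 + (18) * (g t) ^ 4 * (hm t) * (deriv (deriv hm) t) + (12) * (g t) ^ 4 * (hm t) * (deriv hm t) * (hp t) + (-24) * (g t) ^ 4 * (hm t) ^ 2 * t + (54) * (g t) ^ 4 * (hm t) ^ 2 * (deriv hm t) + (4) * (g t) ^ 4 * (hm t) ^ 3 * (hp t) + (16) * (g t) ^ 4 * (hm t) ^ 4 + (-28) * (g t) ^ 4 * (deriv g t) * (hm t) + (24) * (g t) ^ 5 * (deriv hm t) + (-4) * (g t) ^ 5 * (hm t) * (hp t) + (-28) * (g t) ^ 5 * (hm t) ^ 2 + (-8) * (g t) ^ 6) * e2c +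
      ((3) * (g t) * (deriv g t) ^ 2 * (hm t) ^ 3 + (-18) * (g t) ^ 2 * (deriv g t) * (hm t) ^ 2 * (deriv hm t) + (-6) * (g t) ^ 2 * (deriv g t) * (hm t) ^ 4 + (27) * (g t) ^ 3 * (hm t) * (deriv hm t) ^ 2 + (18) * (g t) ^ 3 * (hm t) ^ 3 * (deriv hm t) + (3) * (g t) ^ 3 * (hm t) ^ 5 + (12) * (g t) ^ 3 * (deriv g t) * (hm t) ^ 2 + (-36) * (g t) ^ 4 * (hm t) * (deriv hm t) + (-12) * (g t) ^ 4 * (hm t) ^ 3 + (12) * (g t) ^ 5 * (hm t)) * e3 +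
      ((-4) * (deriv g t) * (u t) * (hm t) ^ 4 + (12) * (g t) * (u t) * (hm t) ^ 3 * (deriv hm t) + (4) * (g t) * (u t) * (hm t) ^ 5 + (-8) * (g t) ^ 2 * (u t) * (hm t) ^ 3) * e4c
  have hAne : (3 * g t * deriv hm t - deriv g t * hm t + g t * hm t ^ 2
      - 2 * g t ^ 2) ≠ 0 := by
    intro h0
    rw [h0, zero_mul] at e2c
    have : -2 * u t * hm t ≠ 0 := by simp [hune t, hmne t]
    exact this e2c.symm
  have hFne : (-2 * g t ^ 2 * hm t ^ 2 * (3 * g t * deriv hm t - deriv g t * hm t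
      + g t * hm t ^ 2 - 2 * g t ^ 2)) ≠ 0 :=
    mul_ne_zero (mul_ne_zero (mul_ne_zero (by norm_num) (pow_ne_zero 2 (hgne t)))
      (pow_ne_zero 2 (hmne t))) hAne
  have tuz : 9 * u t * deriv (deriv hm) t + 9 * (u t * hm t + g t) * deriv hm t
      + u t * hm t ^ 3 + 3 * g t * hm t ^ 2 - 3 * deriv g t * hm t
      - 12 * g t * u t * hm t - 4 * t * u t * hm t - 8 * deriv g t * u t
      - 6 * g t ^ 2 = 0 := by
    rcases mul_eq_zero.mp key with h | h
    · exact absurd h hFne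
    · exact h
  have hU := hune t
  field_simp
  linear_combination tuz
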